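/- arXiv:2012.04117 — 5 statements merged into one kernel-verified Lean document; each statement's English description precedes it below -/
import Mathlib

section
/- The local dampening mechanism M_LD, which outputs r ∈ R with probability proportional to exp(ε · D_{u,δ^u}(x,r) / 2), satisfies ε-differential privacy whenever δ^u is admissible: for any neighboring databases x, y and any output r, Pr[M_LD(x) = r] ≤ exp(ε) · Pr[M_LD(y) = r]. -/
/-- The local dampening mechanism (exponential weights over a 1-Lipschitz dampened
utility) satisfies ε-differential privacy. -/
theorem local_dampening_dp {D R : Type*} [DecidableEq D] [Fintype R] [Nonempty R] {n : ℕ}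
    (ε : ℝ) (hε : 0 ≤ ε) (Df : (Fin n → D) → R → ℝ)
    (hlip : ∀ x y : Fin n → D, hammingDist x y ≤ 1 → ∀ r : R, |Df x r - Df y r| ≤ 1) :
    ∀ x y : Fin n → D, hammingDist x y ≤ 1 → ∀ r : R,
      Real.exp (ε * Df x r / 2) / ∑ r' : R, Real.exp (ε * Df x r' / 2) ≤
      Real.exp ε *
        (Real.exp (ε * Df y r / 2) / ∑ r' : R, Real.exp (ε * Df y r' / 2)) := by
  intro x y hxy r
  have hSx : 0 < ∑ r' : R, Real.exp (ε * Df x r' / 2) :=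
    Finset.sum_pos (fun i _ => Real.exp_pos _) Finset.univ_nonempty
  have hSy : 0 < ∑ r' : R, Real.exp (ε * Df y r' / 2) :=
    Finset.sum_pos (fun i _ => Real.exp_pos _) Finset.univ_nonempty
  have hnum : Real.exp (ε * Df x r / 2) ≤ Real.exp (ε / 2) * Real.exp (ε * Df y r / 2) := by
    rw [← Real.exp_add]
    apply Real.exp_le_exp.2
    have h := (abs_le.1 (hlip x y hxy r)).2
    nlinarith
  have hden : ∑ r' : R, Real.exp (ε * Df y r' / 2) ≤
      Real.exp (ε / 2) * ∑ r' : R, Real.exp (ε * Df x r' / 2) := by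
    rw [Finset.mul_sum]
    apply Finset.sum_le_sum
    intro i _
    rw [← Real.exp_add]
    apply Real.exp_le_exp.2
    have h := (abs_le.1 (hlip x y hxy i)).1
    nlinarith
  rw [div_le_iff₀ hSx, show Real.exp ε * (Real.exp (ε * Df y r / 2) /
      ∑ r' : R, Real.exp (ε * Df y r' / 2)) * ∑ r' : R, Real.exp (ε * Df x r' / 2) =
      Real.exp ε * (Real.exp (ε * Df y r / 2) * ∑ r' : R, Real.exp (ε * Df x r' / 2)) /
      ∑ r' : R, Real.exp (ε * Df y r' / 2) from by ring, le_div_iff₀ hSy]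
  have key : Real.exp (ε / 2) * Real.exp (ε / 2) = Real.exp ε := by
    rw [← Real.exp_add]; ring_nf
  calc Real.exp (ε * Df x r / 2) * ∑ r' : R, Real.exp (ε * Df y r' / 2)
      ≤ (Real.exp (ε / 2) * Real.exp (ε * Df y r / 2)) *
        (Real.exp (ε / 2) * ∑ r' : R, Real.exp (ε * Df x r' / 2)) :=
        mul_le_mul hnum hden hSy.le (by positivity)
    _ = Real.exp ε * (Real.exp (ε * Df y r / 2) * ∑ r' : R, Real.exp (ε * Df x r' / 2)) := by
        rw [← key]; ring
end

section
/- Any mechanism that outputs r ∈ R with probability proportional to exp(ε·f(x,r)/2), where f satisfies the bounded-difference property |f(x,r) − f(y,r)| ≤ 1 for all neighboring databases x,y and all r, satisfies ε-differential privacy; in particular Pr[M(x)=r]/Pr[M(y)=r] ∈ [exp(−ε), exp(ε)]. -/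
private lemma exp_weights_upper {D R : Type*} [DecidableEq D] [Fintype R] [Nonempty R] {n : ℕ}
    (ε : ℝ) (hε : 0 ≤ ε) (f : (Fin n → D) → R → ℝ)
    (hbd : ∀ x y : Fin n → D, hammingDist x y ≤ 1 → ∀ r : R, |f x r - f y r| ≤ 1)
    (x y : Fin n → D) (hxy : hammingDist x y ≤ 1) (r : R) :
    Real.exp (ε * f x r / 2) / ∑ r' : R, Real.exp (ε * f x r' / 2) ≤
      Real.exp ε * (Real.exp (ε * f y r / 2) / ∑ r' : R, Real.exp (ε * f y r' / 2)) := by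
  have hSx : (0:ℝ) < ∑ r' : R, Real.exp (ε * f x r' / 2) :=
    Finset.sum_pos (fun i _ => Real.exp_pos _) Finset.univ_nonempty
  have hSy : (0:ℝ) < ∑ r' : R, Real.exp (ε * f y r' / 2) :=
    Finset.sum_pos (fun i _ => Real.exp_pos _) Finset.univ_nonempty
  rw [← mul_div_assoc, div_le_div_iff₀ hSx hSy, mul_assoc]
  have hnum : Real.exp (ε * f x r / 2) ≤ Real.exp (ε/2) * Real.exp (ε * f y r / 2) := by
    rw [← Real.exp_add]
    apply Real.exp_le_exp.mpr
    have h1 : f x r - f y r ≤ 1 := (abs_le.mp (hbd x y hxy r)).2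
    nlinarith
  have hsum : (∑ r' : R, Real.exp (ε * f y r' / 2)) ≤
      Real.exp (ε/2) * ∑ r' : R, Real.exp (ε * f x r' / 2) := by
    rw [Finset.mul_sum]
    apply Finset.sum_le_sum
    intro i _
    rw [← Real.exp_add]
    apply Real.exp_le_exp.mpr
    have h1 : f y i - f x i ≤ 1 := by
      have := abs_le.mp (hbd x y hxy i)
      linarith [this.1]
    nlinarith
  calc Real.exp (ε * f x r / 2) * ∑ r' : R, Real.exp (ε * f y r' / 2)
      ≤ (Real.exp (ε/2) * Real.exp (ε * f y r / 2)) *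
          (Real.exp (ε/2) * ∑ r' : R, Real.exp (ε * f x r' / 2)) := by
        apply mul_le_mul hnum hsum (le_of_lt hSy)
        positivity
    _ = (Real.exp (ε/2) * Real.exp (ε/2)) *
          (Real.exp (ε * f y r / 2) * ∑ r' : R, Real.exp (ε * f x r' / 2)) := by ring
    _ = Real.exp ε * (Real.exp (ε * f y r / 2) * ∑ r' : R, Real.exp (ε * f x r' / 2)) := by
        rw [← Real.exp_add, add_halves]

/-- Any exponential-weights mechanism over a score function with bounded differences
between neighboring databases satisfies ε-differential privacy, with the probability
ratio lying in `[exp(−ε), exp(ε)]`. -/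
theorem exp_weights_dp {D R : Type*} [DecidableEq D] [Fintype R] [Nonempty R] {n : ℕ}
    (ε : ℝ) (hε : 0 ≤ ε) (f : (Fin n → D) → R → ℝ)
    (hbd : ∀ x y : Fin n → D, hammingDist x y ≤ 1 → ∀ r : R, |f x r - f y r| ≤ 1) :
    ∀ x y : Fin n → D, hammingDist x y ≤ 1 → ∀ r : R,
      Real.exp (-ε) *
          (Real.exp (ε * f y r / 2) / ∑ r' : R, Real.exp (ε * f y r' / 2)) ≤
        Real.exp (ε * f x r / 2) / ∑ r' : R, Real.exp (ε * f x r' / 2) ∧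
      Real.exp (ε * f x r / 2) / ∑ r' : R, Real.exp (ε * f x r' / 2) ≤
        Real.exp ε *
          (Real.exp (ε * f y r / 2) / ∑ r' : R, Real.exp (ε * f y r' / 2)) := by
  intro x y hxy r
  constructor
  · have h := exp_weights_upper ε hε f hbd y x (by rwa [hammingDist_comm]) r
    have hpos : (0:ℝ) < Real.exp ε := Real.exp_pos _
    rw [Real.exp_neg]
    rw [inv_mul_le_iff₀ hpos] at *
    linarith [h]
  · exact exp_weights_upper ε hε f hbd x y hxy r
end

section
/- Let δ^u be an admissible and bounded sensitivity function (δ^u(x,t,r) = Δu for all t ≥ n), with u^s(x,r) = u(x,r) − s the shifted utility. Define s₀ = n·Δu + max_{r'∈R} u(x,r'). Then for every s ≥ s₀ and every r ∈ R, the normalized exponential weights coincide: exp(ε·D_{u^s,δ^u}(x,r)/2) / Σ_{r'} exp(ε·D_{u^s,δ^u}(x,r')/2) = exp(ε·D_{u^{s₀},δ^u}(x,r)/2) / Σ_{r'} exp(ε·D_{u^{s₀},δ^u}(x,r')/2). Consequently the limit as s → ∞ of these probabilities exists and equals the value at s₀. -/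
open Filter Topology

/-- Element local sensitivity at distance `t`. -/
noncomputable def LSE {D R : Type*} [DecidableEq D] {n : ℕ}
    (u : (Fin n → D) → R → ℝ) (x : Fin n → D) (t : ℕ) (r : R) : ℝ :=
  ⨆ y : {y : Fin n → D // hammingDist x y ≤ t},
    ⨆ z : {z : Fin n → D // hammingDist y.1 z ≤ 1}, |u y.1 r - u z.1 r|

/-- A sensitivity function is admissible. -/
def Admissible {D R : Type*} [DecidableEq D] {n : ℕ}
    (u : (Fin n → D) → R → ℝ) (δ : (Fin n → D) → ℕ → R → ℝ) : Prop :=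
  (∀ (x : Fin n → D) (r : R), LSE u x 0 r ≤ δ x 0 r) ∧
  (∀ x y : Fin n → D, hammingDist x y ≤ 1 → ∀ (t : ℕ) (r : R), δ y t r ≤ δ x (t + 1) r)

/-- Breakpoints of the dampening function. -/
noncomputable def bkpt {X R : Type*} (δ : X → ℕ → R → ℝ) (x : X) (i : ℤ) (r : R) : ℝ :=
  if 0 ≤ i then ∑ j ∈ Finset.range i.toNat, δ x j r
  else -∑ j ∈ Finset.range (-i).toNat, δ x j r

/-- For an admissible, positive and bounded sensitivity function, the normalized
exponential weights of the dampened shifted utility `u − s` coincide for all shifts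
`s ≥ s₀ = n·Δu + max_{r'} u(x,r')`; consequently the limit as `s → ∞` exists and
equals the value at `s₀`. -/
theorem shifted_weights_stabilize {D R : Type*} [Fintype D] [DecidableEq D]
    [Fintype R] [Nonempty R] {n : ℕ}
    (ε Δu : ℝ) (hΔ : 0 < Δu)
    (u : (Fin n → D) → R → ℝ) (δ : (Fin n → D) → ℕ → R → ℝ)
    (hadm : Admissible u δ) (hpos : ∀ x t r, 0 < δ x t r)
    (hbounded : ∀ (x : Fin n → D) (t : ℕ) (r : R), n ≤ t → δ x t r = Δu)
    (Df : ℝ → (Fin n → D) → R → ℝ)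
    (hDf : ∀ (s : ℝ) (x : Fin n → D) (r : R), ∃ i : ℤ,
      bkpt δ x i r ≤ u x r - s ∧ u x r - s < bkpt δ x (i + 1) r ∧
      Df s x r = (u x r - s - bkpt δ x i r) / (bkpt δ x (i + 1) r - bkpt δ x i r) + i) :
    ∀ (x : Fin n → D) (r : R),
      (∀ s : ℝ, (n : ℝ) * Δu + (⨆ r' : R, u x r') ≤ s →
        Real.exp (ε * Df s x r / 2) / ∑ r' : R, Real.exp (ε * Df s x r' / 2) =
        Real.exp (ε * Df ((n : ℝ) * Δu + ⨆ r' : R, u x r') x r / 2) /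
          ∑ r' : R, Real.exp (ε * Df ((n : ℝ) * Δu + ⨆ r' : R, u x r') x r' / 2)) ∧
      Tendsto
        (fun s : ℝ =>
          Real.exp (ε * Df s x r / 2) / ∑ r' : R, Real.exp (ε * Df s x r' / 2))
        atTop
        (𝓝 (Real.exp (ε * Df ((n : ℝ) * Δu + ⨆ r' : R, u x r') x r / 2) /
          ∑ r' : R, Real.exp (ε * Df ((n : ℝ) * Δu + ⨆ r' : R, u x r') x r' / 2))) := by
  intro x r
  have hΔ0 : Δu ≠ 0 := hΔ.ne'
  set s₀ : ℝ := (n : ℝ) * Δu + ⨆ r' : R, u x r' with hs₀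
  set S : R → ℝ := fun r' => ∑ j ∈ Finset.range n, δ x j r' with hS
  -- δ is monotone in t
  have hmono : ∀ (r' : R), Monotone (fun t => δ x t r') := by
    intro r'
    exact monotone_nat_of_le_succ (fun t => hadm.2 x x (by simp) t r')
  have hle : ∀ (r' : R) (j : ℕ), j ≤ n → δ x j r' ≤ Δu := by
    intro r' j hj
    have h1 : δ x j r' ≤ δ x n r' := hmono r' hj
    rwa [hbounded x n r' le_rfl] at h1
  have hSle : ∀ r' : R, S r' ≤ (n : ℝ) * Δu := by
    intro r'
    calc S r' ≤ ∑ _j ∈ Finset.range n, Δu :=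
          Finset.sum_le_sum (fun j hj => hle r' j (le_of_lt (Finset.mem_range.1 hj)))
      _ = (n : ℝ) * Δu := by
          rw [Finset.sum_const, Finset.card_range, nsmul_eq_mul]
  -- sum formula for m ≥ n
  have hsum : ∀ (r' : R) (m : ℕ), n ≤ m →
      ∑ j ∈ Finset.range m, δ x j r' = S r' + ((m : ℝ) - n) * Δu := by
    intro r' m hm
    induction m, hm using Nat.le_induction with
    | base => simp [hS]
    | succ m hm ih =>
        rw [Finset.sum_range_succ, ih, hbounded x m r' hm]
        push_cast
        ring
  -- bkpt for nonpositive index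
  have hneg : ∀ (r' : R) (i : ℤ), i ≤ 0 →
      bkpt δ x i r' = -∑ j ∈ Finset.range (-i).toNat, δ x j r' := by
    intro r' i hi
    unfold bkpt
    split_ifs with h
    · have : i = 0 := le_antisymm hi h
      subst this
      simp
    · rfl
  -- strict monotonicity of bkpt
  have hBlt : ∀ (r' : R) (i : ℤ), bkpt δ x i r' < bkpt δ x (i + 1) r' := by
    intro r' i
    rcases le_or_gt 0 i with h | h
    · have h1 : (0:ℤ) ≤ i + 1 := by omega
      have ht : (i + 1).toNat = i.toNat + 1 := by omega
      unfold bkpt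
      rw [if_pos h, if_pos h1, ht, Finset.sum_range_succ]
      have := hpos x i.toNat r'
      linarith
    · have h1 : i + 1 ≤ 0 := by omega
      rw [hneg r' i (by omega), hneg r' (i + 1) h1]
      have ht : (-i).toNat = (-(i + 1)).toNat + 1 := by omega
      rw [ht, Finset.sum_range_succ]
      have := hpos x (-(i + 1)).toNat r'
      linarith
  have hBmono : ∀ r' : R, StrictMono (fun i => bkpt δ x i r') :=
    fun r' => strictMono_int_of_lt_succ (hBlt r')
  -- affine formula for i ≤ -n
  have hBaff : ∀ (r' : R) (i : ℤ), i ≤ -(n : ℤ) →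
      bkpt δ x i r' = -(S r') + ((n : ℝ) + (i : ℝ)) * Δu := by
    intro r' i hi
    rw [hneg r' i (by omega)]
    have hm : n ≤ (-i).toNat := by omega
    rw [hsum r' (-i).toNat hm]
    have : ((-i).toNat : ℝ) = -(i : ℝ) := by
      have : ((-i).toNat : ℤ) = -i := Int.toNat_of_nonneg (by omega)
      exact_mod_cast this
    rw [this]
    ring
  have hBn : ∀ r' : R, bkpt δ x (-(n : ℤ)) r' = -(S r') := by
    intro r'
    rw [hBaff r' _ le_rfl]
    push_cast
    ring
  have hsup : ∀ r' : R, u x r' ≤ ⨆ r'' : R, u x r'' :=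
    fun r' => le_ciSup (Set.Finite.bddAbove (Set.finite_range _)) r'
  -- main formula for Df
  have hDf' : ∀ (r' : R) (s : ℝ), s₀ ≤ s →
      Df s x r' = (u x r' - s + S r') / Δu - n := by
    intro r' s hs
    obtain ⟨i, h1, h2, h3⟩ := hDf s x r'
    have hv : u x r' - s ≤ bkpt δ x (-(n : ℤ)) r' := by
      have h4 := hsup r'
      have h5 := hSle r'
      rw [hBn r']
      have : s₀ = (n : ℝ) * Δu + ⨆ r'' : R, u x r'' := hs₀
      linarith
    have hi_le : i ≤ -(n : ℤ) := by
      by_contra hc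
      push_neg at hc
      have := hBmono r' hc
      simp only at this
      linarith
    rcases eq_or_lt_of_le hi_le with heq | hlt
    · subst heq
      have hv' : u x r' - s = bkpt δ x (-(n : ℤ)) r' := le_antisymm hv h1
      rw [h3, hv', hBn r']
      push_cast
      field_simp
      ring
    · have hi1 : i + 1 ≤ -(n : ℤ) := by omega
      rw [h3, hBaff r' i hi_le, hBaff r' (i + 1) hi1]
      have hd : -(S r') + ((n : ℝ) + ((i : ℤ) + 1 : ℤ)) * Δu -
          (-(S r') + ((n : ℝ) + (i : ℝ)) * Δu) = Δu := by
        push_cast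
        ring
      rw [hd]
      field_simp
      ring
  -- the shift identity
  have hshift : ∀ (r' : R) (s : ℝ), s₀ ≤ s →
      Real.exp (ε * Df s x r' / 2) =
        Real.exp (ε * Df s₀ x r' / 2) * Real.exp (ε * ((s₀ - s) / Δu) / 2) := by
    intro r' s hs
    rw [← Real.exp_add]
    congr 1
    rw [hDf' r' s hs, hDf' r' s₀ le_rfl]
    field_simp
    ring
  have hsum_pos : ∀ s : ℝ, 0 < ∑ r' : R, Real.exp (ε * Df s x r' / 2) := by
    intro s
    exact Finset.sum_pos (fun _ _ => Real.exp_pos _) Finset.univ_nonempty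
  have hmain : ∀ s : ℝ, s₀ ≤ s →
      Real.exp (ε * Df s x r / 2) / ∑ r' : R, Real.exp (ε * Df s x r' / 2) =
      Real.exp (ε * Df s₀ x r / 2) / ∑ r' : R, Real.exp (ε * Df s₀ x r' / 2) := by
    intro s hs
    rw [hshift r s hs]
    have : ∑ r' : R, Real.exp (ε * Df s x r' / 2) =
        (∑ r' : R, Real.exp (ε * Df s₀ x r' / 2)) * Real.exp (ε * ((s₀ - s) / Δu) / 2) := by
      rw [Finset.sum_mul]
      exact Finset.sum_congr rfl (fun r' _ => hshift r' s hs)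
    rw [this, mul_div_mul_right _ _ (Real.exp_ne_zero _)]
  refine ⟨hmain, ?_⟩
  have hev : (fun _ : ℝ =>
      Real.exp (ε * Df s₀ x r / 2) / ∑ r' : R, Real.exp (ε * Df s₀ x r' / 2)) =ᶠ[atTop]
      (fun s : ℝ =>
        Real.exp (ε * Df s x r / 2) / ∑ r' : R, Real.exp (ε * Df s x r' / 2)) := by
    filter_upwards [eventually_ge_atTop s₀] with s hs
    exact (hmain s hs).symm
  exact Tendsto.congr' hev tendsto_const_nhds
end

section
/- Element local sensitivity of information gain at distance 0: for a dataset T with attribute A (values j ∈ A) and class attribute C (values c ∈ C), let the utility be IG(T, A) = −Σ_{j∈A} Σ_{c∈C} τ^A_{j,c} · log₂(τ^A_{j,c}/τ^A_j), where τ^A_j counts records with attribute value j and τ^A_{j,c} counts records with attribute value j and class value c. Then the maximum of |IG(T,A) − IG(T',A)| over all datasets T' obtained from T by adding or removing a single record equals max_{j∈A, c∈C} max( f(τ^A_j) − f(τ^A_{j,c}), g(τ^A_{j,c}) − g(τ^A_j) ), where f(x) = x·log₂((x+1)/x) + log₂(x+1) (f(x)=0 for x ≤ 0) and g(x) = x·log₂((x−1)/x)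 − log₂(x−1) (g(x)=0 for x ≤ 1). -/
/-- Number of records of `T` with attribute value `j`. -/
noncomputable def tauJ {ρ A : Type*} [DecidableEq A] (attA : ρ → A)
    (T : Multiset ρ) (j : A) : ℕ :=
  (T.filter fun r => attA r = j).card

/-- Number of records of `T` with attribute value `j` and class value `c`. -/
noncomputable def tauJC {ρ A C : Type*} [DecidableEq A] [DecidableEq C]
    (attA : ρ → A) (attC : ρ → C) (T : Multiset ρ) (j : A) (c : C) : ℕ :=
  (T.filter fun r => attA r = j ∧ attC r = c).card

/-- The (simplified) information gain utility
`IG(T,A) = −Σ_{j∈A} Σ_{c∈C} τ^A_{j,c} · log₂(τ^A_{j,c}/τ^A_j)`. -/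
noncomputable def IG {ρ A C : Type*} [Fintype A] [Fintype C] [DecidableEq A]
    [DecidableEq C] (attA : ρ → A) (attC : ρ → C) (T : Multiset ρ) : ℝ :=
  -∑ j : A, ∑ c : C, (tauJC attA attC T j c : ℝ) *
    Real.logb 2 ((tauJC attA attC T j c : ℝ) / (tauJ attA T j : ℝ))

/-- `g(x) = x·log₂((x−1)/x) − log₂(x−1)`, with `g(x) = 0` for `x ≤ 1`. -/
noncomputable def gfun (x : ℕ) : ℝ :=
  if x ≤ 1 then 0
  else (x : ℝ) * Real.logb 2 (((x : ℝ) - 1) / (x : ℝ)) - Real.logb 2 ((x : ℝ) - 1)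

/-- `f(x) = x·log₂((x+1)/x) + log₂(x+1)`, with `f(0) = 0`. -/
noncomputable def ffun (x : ℕ) : ℝ :=
  if x = 0 then 0
  else (x : ℝ) * Real.logb 2 (((x : ℝ) + 1) / (x : ℝ)) + Real.logb 2 ((x : ℝ) + 1)

/-! ### Auxiliary development -/

noncomputable def Hfn (x : ℝ) : ℝ := x * Real.log x

lemma log2_pos' : (0:ℝ) < Real.log 2 := Real.log_pos one_lt_two

lemma ffun_eq_Hfn (n : ℕ) : ffun n = (Hfn ((n:ℝ)+1) - Hfn n) / Real.log 2 := by
  unfold ffun Hfn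
  rcases Nat.eq_zero_or_pos n with h | h
  · subst h; simp
  · have hn : (0:ℝ) < (n:ℝ) := by exact_mod_cast h
    rw [if_neg (by omega)]
    rw [Real.logb_div (by positivity) (by positivity)]
    unfold Real.logb
    field_simp
    ring

lemma gfun_eq_Hfn (n : ℕ) : gfun n = (Hfn ((n:ℝ)-1) - Hfn n) / Real.log 2 := by
  unfold gfun Hfn
  rcases Nat.lt_or_ge n 2 with h | h
  · interval_cases n
    · simp [Real.log_neg_eq_log]
    · norm_num
  · have hn : (2:ℝ) ≤ (n:ℝ) := by exact_mod_cast h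
    rw [if_neg (by omega)]
    rw [Real.logb_div (by linarith) (by linarith)]
    unfold Real.logb
    field_simp
    ring

lemma Hfn_step_mono : Monotone (fun n : ℕ => Hfn ((n:ℝ)+1) - Hfn n) := by
  apply monotone_nat_of_le_succ
  intro n
  have h := Real.convexOn_mul_log.slope_mono_adjacent
    (x := (n:ℝ)) (y := (n:ℝ)+1) (z := (n:ℝ)+2)
    (Set.mem_Ici.mpr (by positivity)) (Set.mem_Ici.mpr (by positivity))
    (by linarith) (by linarith)
  simp only [add_sub_cancel_left] at h
  have h'' : ((n:ℝ)+2) - ((n:ℝ)+1) = 1 := by ring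
  rw [h''] at h
  rw [div_one, div_one] at h
  unfold Hfn
  push_cast
  convert h using 2 <;> ring

lemma ffun_mono : Monotone ffun := by
  intro a b hab
  rw [ffun_eq_Hfn, ffun_eq_Hfn]
  exact div_le_div_of_nonneg_right (Hfn_step_mono hab) log2_pos'.le

lemma gfun_succ_sub (s t : ℕ) : gfun (s+1) - gfun (t+1) = ffun t - ffun s := by
  rw [gfun_eq_Hfn, gfun_eq_Hfn, ffun_eq_Hfn, ffun_eq_Hfn]
  push_cast
  ring

section Aux
variable {ρ A C : Type*} [Fintype A] [Fintype C] [DecidableEq A] [DecidableEq C]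
  (attA : ρ → A) (attC : ρ → C)

lemma sum_tauJC (T : Multiset ρ) (j : A) :
    ∑ c : C, tauJC attA attC T j c = tauJ attA T j := by
  unfold tauJC tauJ
  induction T using Multiset.induction_on with
  | empty => simp
  | cons r T ih =>
    simp only [Multiset.filter_cons, Multiset.card_add]
    rw [Finset.sum_add_distrib, ih]
    by_cases h : attA r = j
    · simp only [h, true_and, apply_ite Multiset.card, Multiset.card_singleton,
        Multiset.card_zero]
      rw [Finset.sum_ite_eq Finset.univ (attC r) (fun _ => 1)]
      simp
    · simp [h]

lemma tauJC_le_tauJ (T : Multiset ρ) (j : A) (c : C) :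
    tauJC attA attC T j c ≤ tauJ attA T j := by
  apply Multiset.card_le_card
  apply Multiset.monotone_filter_right
  exact fun r hr => hr.1

lemma tauJ_cons (r : ρ) (T : Multiset ρ) (j : A) :
    tauJ attA (r ::ₘ T) j = tauJ attA T j + if attA r = j then 1 else 0 := by
  unfold tauJ
  rw [Multiset.filter_cons, Multiset.card_add]
  split <;> simp [add_comm]

lemma tauJC_cons (r : ρ) (T : Multiset ρ) (j : A) (c : C) :
    tauJC attA attC (r ::ₘ T) j c
      = tauJC attA attC T j c + if attA r = j ∧ attC r = c then 1 else 0 := by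
  unfold tauJC
  rw [Multiset.filter_cons, Multiset.card_add]
  split <;> simp [add_comm]

lemma IG_eq_Hfn (T : Multiset ρ) :
    IG attA attC T = ∑ j : A,
      ((Hfn (tauJ attA T j) - ∑ c : C, Hfn (tauJC attA attC T j c)) / Real.log 2) := by
  unfold IG
  rw [← Finset.sum_neg_distrib]
  apply Finset.sum_congr rfl
  intro j _
  have hsum : (∑ c : C, (tauJC attA attC T j c : ℝ)) = (tauJ attA T j : ℝ) := by
    exact_mod_cast congrArg (Nat.cast (R := ℝ)) (sum_tauJC attA attC T j)
  have per : ∀ c : C, (tauJC attA attC T j c : ℝ) *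
      Real.logb 2 ((tauJC attA attC T j c : ℝ) / (tauJ attA T j : ℝ))
      = Hfn (tauJC attA attC T j c) / Real.log 2
        - (tauJC attA attC T j c : ℝ) * Real.log (tauJ attA T j) / Real.log 2 := by
    intro c
    by_cases hs : tauJC attA attC T j c = 0
    · simp [hs, Hfn]
    · have ht : tauJ attA T j ≠ 0 := by
        have := tauJC_le_tauJ attA attC T j c; omega
      have hs' : (0:ℝ) < (tauJC attA attC T j c : ℝ) := by
        exact_mod_cast Nat.pos_of_ne_zero hs
      have ht' : (0:ℝ) < (tauJ attA T j : ℝ) := by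
        exact_mod_cast Nat.pos_of_ne_zero ht
      rw [Real.logb, Real.log_div (ne_of_gt hs') (ne_of_gt ht')]
      unfold Hfn
      ring
  rw [Finset.sum_congr rfl (fun c _ => per c)]
  rw [Finset.sum_sub_distrib, ← Finset.sum_div]
  simp only [mul_div_assoc]
  rw [← Finset.sum_mul, hsum]
  unfold Hfn
  ring

lemma IG_cons (r : ρ) (T : Multiset ρ) :
    IG attA attC (r ::ₘ T) = IG attA attC T
      + (ffun (tauJ attA T (attA r)) - ffun (tauJC attA attC T (attA r) (attC r))) := by
  rw [IG_eq_Hfn attA attC (r ::ₘ T), IG_eq_Hfn attA attC T, ffun_eq_Hfn, ffun_eq_Hfn]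
  rw [add_comm, ← sub_eq_iff_eq_add, ← Finset.sum_sub_distrib]
  rw [Finset.sum_eq_single_of_mem (attA r) (Finset.mem_univ _)]
  · have hJ : tauJ attA (r ::ₘ T) (attA r) = tauJ attA T (attA r) + 1 := by
      rw [tauJ_cons]; simp
    have hC : ∀ c : C, tauJC attA attC (r ::ₘ T) (attA r) c
        = tauJC attA attC T (attA r) c + if attC r = c then 1 else 0 := by
      intro c; rw [tauJC_cons]; simp
    rw [hJ]
    have hsum : ∑ c : C, Hfn (tauJC attA attC (r ::ₘ T) (attA r) c)
        = (∑ c : C, Hfn (tauJC attA attC T (attA r) c))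
          + (Hfn ((tauJC attA attC T (attA r) (attC r) : ℝ) + 1)
             - Hfn (tauJC attA attC T (attA r) (attC r))) := by
      rw [add_comm, ← sub_eq_iff_eq_add, ← Finset.sum_sub_distrib]
      rw [Finset.sum_eq_single_of_mem (attC r) (Finset.mem_univ _)]
      · rw [hC]; simp
      · intro c _ hc
        rw [hC]
        simp [Ne.symm hc]
    rw [hsum]
    push_cast
    ring
  · intro j _ hj
    have h1 : tauJ attA (r ::ₘ T) j = tauJ attA T j := by
      rw [tauJ_cons]; simp [Ne.symm hj]
    have h2 : ∀ c : C, tauJC attA attC (r ::ₘ T) j c = tauJC attA attC T j c := by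
      intro c; rw [tauJC_cons]; simp [Ne.symm hj]
    simp [h1, h2]

lemma abs_IG_cons (r : ρ) (T : Multiset ρ) :
    |IG attA attC T - IG attA attC (r ::ₘ T)|
      = ffun (tauJ attA T (attA r)) - ffun (tauJC attA attC T (attA r) (attC r)) := by
  rw [IG_cons]
  have hle : ffun (tauJC attA attC T (attA r) (attC r)) ≤ ffun (tauJ attA T (attA r)) :=
    ffun_mono (tauJC_le_tauJ attA attC T (attA r) (attC r))
  have h : IG attA attC T - (IG attA attC T
      + (ffun (tauJ attA T (attA r)) - ffun (tauJC attA attC T (attA r) (attC r))))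
      = -(ffun (tauJ attA T (attA r)) - ffun (tauJC attA attC T (attA r) (attC r))) := by
    ring
  rw [h, abs_neg, abs_of_nonneg (sub_nonneg.mpr hle)]

lemma abs_IG_erase [DecidableEq ρ] (r : ρ) (T : Multiset ρ) (hr : r ∈ T) :
    |IG attA attC T - IG attA attC (T.erase r)|
      = gfun (tauJC attA attC T (attA r) (attC r)) - gfun (tauJ attA T (attA r)) := by
  have hT : r ::ₘ T.erase r = T := Multiset.cons_erase hr
  have hIG : IG attA attC T = IG attA attC (T.erase r)
      + (ffun (tauJ attA (T.erase r) (attA r))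
         - ffun (tauJC attA attC (T.erase r) (attA r) (attC r))) := by
    conv_lhs => rw [← hT]
    exact IG_cons attA attC r (T.erase r)
  have hJ : tauJ attA T (attA r) = tauJ attA (T.erase r) (attA r) + 1 := by
    conv_lhs => rw [← hT]
    rw [tauJ_cons]; simp
  have hC : tauJC attA attC T (attA r) (attC r)
      = tauJC attA attC (T.erase r) (attA r) (attC r) + 1 := by
    conv_lhs => rw [← hT]
    rw [tauJC_cons]; simp
  have hle : ffun (tauJC attA attC (T.erase r) (attA r) (attC r))
      ≤ ffun (tauJ attA (T.erase r) (attA r)) :=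
    ffun_mono (tauJC_le_tauJ attA attC (T.erase r) (attA r) (attC r))
  rw [hIG, hJ, hC, gfun_succ_sub]
  have h : IG attA attC (T.erase r)
      + (ffun (tauJ attA (T.erase r) (attA r))
         - ffun (tauJC attA attC (T.erase r) (attA r) (attC r)))
      - IG attA attC (T.erase r)
      = ffun (tauJ attA (T.erase r) (attA r))
        - ffun (tauJC attA attC (T.erase r) (attA r) (attC r)) := by ring
  rw [h, abs_of_nonneg (sub_nonneg.mpr hle)]

end Aux

/-- Element local sensitivity of information gain at distance 0: the maximum change of
`IG` under the addition or removal of a single record equals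
`max_{j,c} max(f(τ^A_j) − f(τ^A_{j,c}), g(τ^A_{j,c}) − g(τ^A_j))`. -/
theorem ig_element_local_sensitivity_zero {ρ A C : Type*} [DecidableEq ρ]
    [Fintype A] [Fintype C] [Nonempty A] [Nonempty C] [DecidableEq A] [DecidableEq C]
    (attA : ρ → A) (attC : ρ → C)
    (hsurj : ∀ (j : A) (c : C), ∃ r : ρ, attA r = j ∧ attC r = c)
    (T : Multiset ρ) :
    (⨆ T' : {T' : Multiset ρ //
        (∃ r : ρ, T' = r ::ₘ T) ∨ (∃ r ∈ T, T' = T.erase r)},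
      |IG attA attC T - IG attA attC T'.1|) =
    ⨆ j : A, ⨆ c : C,
      max (ffun (tauJ attA T j) - ffun (tauJC attA attC T j c))
          (gfun (tauJC attA attC T j c) - gfun (tauJ attA T j)) := by
  set RHS := ⨆ j : A, ⨆ c : C,
      max (ffun (tauJ attA T j) - ffun (tauJC attA attC T j c))
          (gfun (tauJC attA attC T j c) - gfun (tauJ attA T j)) with hRHS
  have hmax : ∀ (j : A) (c : C),
      max (ffun (tauJ attA T j) - ffun (tauJC attA attC T j c))
          (gfun (tauJC attA attC T j c) - gfun (tauJ attA T j)) ≤ RHS := by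
    intro j c
    have h1 := le_ciSup (Set.Finite.bddAbove (Set.finite_range
      (fun c : C => max (ffun (tauJ attA T j) - ffun (tauJC attA attC T j c))
          (gfun (tauJC attA attC T j c) - gfun (tauJ attA T j))))) c
    have h2 := le_ciSup (Set.Finite.bddAbove (Set.finite_range
      (fun j : A => ⨆ c : C, max (ffun (tauJ attA T j) - ffun (tauJC attA attC T j c))
          (gfun (tauJC attA attC T j c) - gfun (tauJ attA T j))))) j
    exact h1.trans h2
  have hbound : ∀ T' : {T' : Multiset ρ //
      (∃ r : ρ, T' = r ::ₘ T) ∨ (∃ r ∈ T, T' = T.erase r)},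
      |IG attA attC T - IG attA attC T'.1| ≤ RHS := by
    rintro ⟨T', hT'⟩
    rcases hT' with ⟨r, rfl⟩ | ⟨r, hr, rfl⟩
    · rw [abs_IG_cons]
      exact (le_max_left _ _).trans (hmax (attA r) (attC r))
    · rw [abs_IG_erase attA attC r T hr]
      exact (le_max_right _ _).trans (hmax (attA r) (attC r))
  have hne : Nonempty {T' : Multiset ρ //
      (∃ r : ρ, T' = r ::ₘ T) ∨ (∃ r ∈ T, T' = T.erase r)} := by
    obtain ⟨r0, -, -⟩ := hsurj (Classical.arbitrary A) (Classical.arbitrary C)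
    exact ⟨⟨r0 ::ₘ T, Or.inl ⟨r0, rfl⟩⟩⟩
  have hbdd : BddAbove (Set.range fun T' : {T' : Multiset ρ //
      (∃ r : ρ, T' = r ::ₘ T) ∨ (∃ r ∈ T, T' = T.erase r)} =>
      |IG attA attC T - IG attA attC T'.1|) := by
    refine ⟨RHS, ?_⟩
    rintro x ⟨T', rfl⟩
    exact hbound T'
  apply le_antisymm
  · exact ciSup_le hbound
  · apply ciSup_le
    intro j
    apply ciSup_le
    intro c
    obtain ⟨r, hrj, hrc⟩ := hsurj j c
    have hf_le : ffun (tauJ attA T j) - ffun (tauJC attA attC T j c)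
        ≤ ⨆ T' : {T' : Multiset ρ //
            (∃ r : ρ, T' = r ::ₘ T) ∨ (∃ r ∈ T, T' = T.erase r)},
          |IG attA attC T - IG attA attC T'.1| := by
      have heq := abs_IG_cons attA attC r T
      rw [hrj, hrc] at heq
      rw [← heq]
      exact le_ciSup hbdd ⟨r ::ₘ T, Or.inl ⟨r, rfl⟩⟩
    apply max_le hf_le
    by_cases h0 : tauJC attA attC T j c = 0
    · have hg0 : gfun (tauJC attA attC T j c) = 0 := by simp [h0, gfun]
      have hf0 : ffun (tauJC attA attC T j c) = 0 := by simp [h0, ffun]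
      have hkey : gfun (tauJC attA attC T j c) - gfun (tauJ attA T j)
          ≤ ffun (tauJ attA T j) - ffun (tauJC attA attC T j c) := by
        rw [hg0, hf0, zero_sub, sub_zero]
        rcases Nat.eq_zero_or_pos (tauJ attA T j) with ht | ht
        · simp [ht, gfun, ffun]
        · obtain ⟨t, hteq⟩ : ∃ t, tauJ attA T j = t + 1 :=
            ⟨tauJ attA T j - 1, by omega⟩
          rw [hteq]
          have h := gfun_succ_sub t 0
          have hg1 : gfun (0+1) = 0 := by simp [gfun]
          have hff0 : ffun 0 = 0 := by simp [ffun]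
          rw [hg1, hff0] at h
          have hm : ffun t ≤ ffun (t+1) := ffun_mono (Nat.le_succ t)
          linarith
      exact hkey.trans hf_le
    · obtain ⟨r', hr'⟩ := Multiset.card_pos_iff_exists_mem.mp (Nat.pos_of_ne_zero h0)
      rw [Multiset.mem_filter] at hr'
      have hr'T := hr'.1
      have hr'j := hr'.2.1
      have hr'c := hr'.2.2
      have heq := abs_IG_erase attA attC r' T hr'T
      rw [hr'j, hr'c] at heq
      rw [← heq]
      exact le_ciSup hbdd ⟨T.erase r', Or.inr ⟨r', hr'T, rfl⟩⟩
end

section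
/- Dominance implies stochastic error domination for softmax-style mechanisms: let R = {r_1,...,r_q} be ordered so that u(x,r_1) ≥ ... ≥ u(x,r_q), and suppose two score functions F, F̄ : R → ℝ satisfy F(r) − F(r̄) ≥ F̄(r) − F̄(r̄) whenever u(x,r) ≥ u(x,r̄) (i.e., F spreads high-utility elements at least as much apart as F̄ does). Let M and M̄ output r with probability proportional to exp(ε F(r)/2) and exp(ε F̄(r)/2) respectively, and define the error E(M) = u* − u(x, M(x)) with u* = max_r u(x,r). Then for every threshold θ ≥ 0, Pr[E(M) ≥ θ] ≤ Pr[E(M̄) ≥ θ], and consequently 𝔼[E(M)] ≤ 𝔼[E(M̄)]. -/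
/-- Dominance implies stochastic error domination for softmax-style mechanisms: if `F`
spreads high-utility elements at least as much apart as `F̄`, then the softmax
mechanism for `F` stochastically dominates that for `F̄` in terms of the error
`E = u* − u(M(x))`, and in particular has smaller expected error. -/
theorem dominance_error_domination {R : Type*} [Fintype R] [Nonempty R]
    (ε : ℝ) (hε : 0 < ε) (u F Fbar : R → ℝ)
    (hdom : ∀ r r' : R, u r' ≤ u r → Fbar r - Fbar r' ≤ F r - F r') :
    (∀ θ : ℝ, 0 ≤ θ →
      (∑ r ∈ Finset.univ.filter fun r => θ ≤ (⨆ r'' : R, u r'') - u r,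
        Real.exp (ε * F r / 2) / ∑ r' : R, Real.exp (ε * F r' / 2)) ≤
      ∑ r ∈ Finset.univ.filter fun r => θ ≤ (⨆ r'' : R, u r'') - u r,
        Real.exp (ε * Fbar r / 2) / ∑ r' : R, Real.exp (ε * Fbar r' / 2)) ∧
    (∑ r : R, ((⨆ r'' : R, u r'') - u r) *
        (Real.exp (ε * F r / 2) / ∑ r' : R, Real.exp (ε * F r' / 2))) ≤
      ∑ r : R, ((⨆ r'' : R, u r'') - u r) *
        (Real.exp (ε * Fbar r / 2) / ∑ r' : R, Real.exp (ε * Fbar r' / 2)) := by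
  set s := (⨆ r'' : R, u r'') with hs
  set a : R → ℝ := fun r => Real.exp (ε * F r / 2) with ha
  set b : R → ℝ := fun r => Real.exp (ε * Fbar r / 2) with hb
  have hA : (0:ℝ) < ∑ r' : R, a r' :=
    Finset.sum_pos (fun _ _ => Real.exp_pos _) Finset.univ_nonempty
  have hB : (0:ℝ) < ∑ r' : R, b r' :=
    Finset.sum_pos (fun _ _ => Real.exp_pos _) Finset.univ_nonempty
  have key : ∀ r r' : R, u r ≤ u r' → a r * b r' ≤ b r * a r' := by
    intro r r' h
    have hd := hdom r' r h
    simp only [ha, hb, ← Real.exp_add, Real.exp_le_exp]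
    nlinarith
  constructor
  · intro θ hθ
    rw [← Finset.sum_div, ← Finset.sum_div, div_le_div_iff₀ hA hB]
    rw [Finset.sum_mul_sum, Finset.sum_mul_sum]
    have split : ∀ c d : R → ℝ,
        (∑ r ∈ Finset.univ.filter fun r => θ ≤ s - u r, ∑ r' : R, c r * d r')
        = (∑ r ∈ Finset.univ.filter fun r => θ ≤ s - u r,
            ∑ r' ∈ Finset.univ.filter fun r => θ ≤ s - u r, c r * d r')
          + ∑ r ∈ Finset.univ.filter fun r => θ ≤ s - u r,
            ∑ r' ∈ Finset.univ.filter fun r => ¬ (θ ≤ s - u r), c r * d r' := by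
      intro c d
      rw [← Finset.sum_add_distrib]
      refine Finset.sum_congr rfl fun r _ => ?_
      exact (Finset.sum_filter_add_sum_filter_not _ _ _).symm
    rw [split a b, split b a]
    have hXX : (∑ r ∈ Finset.univ.filter fun r => θ ≤ s - u r,
            ∑ r' ∈ Finset.univ.filter fun r => θ ≤ s - u r, a r * b r')
        = ∑ r ∈ Finset.univ.filter fun r => θ ≤ s - u r,
            ∑ r' ∈ Finset.univ.filter fun r => θ ≤ s - u r, b r * a r' := by
      rw [Finset.sum_comm]
      exact Finset.sum_congr rfl fun _ _ => Finset.sum_congr rfl fun _ _ => mul_comm _ _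
    rw [hXX]
    refine add_le_add_right ?_ _
    refine Finset.sum_le_sum fun r hr => Finset.sum_le_sum fun r' hr' => ?_
    simp only [Finset.mem_filter] at hr hr'
    exact key r r' (by linarith [hr.2, lt_of_not_ge hr'.2])
  · have hrw : ∀ c : R → ℝ, (∑ r : R, (s - u r) * (c r / ∑ r' : R, c r'))
        = (∑ r : R, (s - u r) * c r) / ∑ r' : R, c r' := by
      intro c; rw [Finset.sum_div]; exact Finset.sum_congr rfl fun _ _ => by ring
    rw [hrw a, hrw b, div_le_div_iff₀ hA hB]
    rw [Finset.sum_mul_sum, Finset.sum_mul_sum]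
    have h2 : ∑ r : R, ∑ r' : R, ((u r' - u r) * (a r * b r' - b r * a r')) ≤ 0 := by
      refine Finset.sum_nonpos fun r _ => Finset.sum_nonpos fun r' _ => ?_
      rcases le_total (u r) (u r') with h | h
      · exact mul_nonpos_of_nonneg_of_nonpos (by linarith) (by linarith [key r r' h])
      · exact mul_nonpos_of_nonpos_of_nonneg (by linarith) (by linarith [key r' r h])
    have e1 : ∑ r : R, ∑ r' : R, (u r' * (a r * b r')) =
        ∑ r : R, ∑ r' : R, (u r * (b r * a r')) := by
      rw [Finset.sum_comm]
      exact Finset.sum_congr rfl fun _ _ => Finset.sum_congr rfl fun _ _ => by ring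
    have e2 : ∑ r : R, ∑ r' : R, (u r' * (b r * a r')) =
        ∑ r : R, ∑ r' : R, (u r * (a r * b r')) := by
      rw [Finset.sum_comm]
      exact Finset.sum_congr rfl fun _ _ => Finset.sum_congr rfl fun _ _ => by ring
    have e3 : ∑ r : R, ∑ r' : R, (s * (a r * b r')) =
        ∑ r : R, ∑ r' : R, (s * (b r * a r')) := by
      rw [Finset.sum_comm]
      exact Finset.sum_congr rfl fun _ _ => Finset.sum_congr rfl fun _ _ => by ring
    have hterm : ∀ r r' : R, (u r' - u r) * (a r * b r' - b r * a r')
        = u r' * (a r * b r') - u r' * (b r * a r')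
          - u r * (a r * b r') + u r * (b r * a r') := fun r r' => by ring
    simp only [hterm, Finset.sum_sub_distrib, Finset.sum_add_distrib] at h2
    have hterm2 : ∀ r r' : R, (s - u r) * a r * b r'
        = s * (a r * b r') - u r * (a r * b r') := fun r r' => by ring
    have hterm3 : ∀ r r' : R, (s - u r) * b r * a r'
        = s * (b r * a r') - u r * (b r * a r') := fun r r' => by ring
    simp only [hterm2, hterm3, Finset.sum_sub_distrib]
    linarith [e1, e2, e3, h2]
end
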